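/- Let a(t) ≤ b(t) ≤ c(t) solve a' = a² + bc, b' = b² + ac, c' = c² + ab on [0,T) with S := 2(a+b+c) > 0. For α ∈ [1,3], define h_α = a + (α−1)b if α ∈ [1,2) and h_α = a + b + (α−2)c if α ∈ [2,3]. If h_α ≥ 0 at t = 0, then h_α ≥ 0 for all t ∈ [0,T). -/

import Mathlib

/-- `h_α`, measuring `α`-nonnegativity of the curvature operator (first kind) in 3D. -/
noncomputable def hAlpha (α a b c : ℝ) : ℝ :=
  if α < 2 then a + (α - 1) * b else a + b + (α - 2) * c

/-- Key comparison lemma: if `g'·S - g·S' ≥ 0`, `S > 0` and `g 0 ≥ 0`, then `g ≥ 0`. -/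
lemma key_quot (g S g' S' : ℝ → ℝ) (T : ℝ) (hT : 0 < T)
    (hg : ∀ t ∈ Set.Ico (0:ℝ) T, HasDerivAt g (g' t) t)
    (hS : ∀ t ∈ Set.Ico (0:ℝ) T, HasDerivAt S (S' t) t)
    (hSpos : ∀ t ∈ Set.Ico (0:ℝ) T, 0 < S t)
    (hnum : ∀ t ∈ Set.Ico (0:ℝ) T, 0 ≤ g' t * S t - g t * S' t)
    (h0 : 0 ≤ g 0) : ∀ t ∈ Set.Ico (0:ℝ) T, 0 ≤ g t := by
  set r : ℝ → ℝ := fun t => g t / S t with hrdef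
  have hr : ∀ t ∈ Set.Ico (0:ℝ) T, HasDerivAt r ((g' t * S t - g t * S' t)/(S t)^2) t :=
    fun t ht => (hg t ht).div (hS t ht) (hSpos t ht).ne'
  have hmono : MonotoneOn r (Set.Ico (0:ℝ) T) := by
    apply monotoneOn_of_deriv_nonneg (convex_Ico 0 T)
    · intro t ht; exact ((hr t ht).continuousAt).continuousWithinAt
    · intro t ht
      rw [interior_Ico] at ht
      exact ((hr t ⟨ht.1.le, ht.2⟩).differentiableAt).differentiableWithinAt
    · intro t ht
      rw [interior_Ico] at ht
      rw [(hr t ⟨ht.1.le, ht.2⟩).deriv]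
      exact div_nonneg (hnum t ⟨ht.1.le, ht.2⟩) (sq_nonneg _)
  intro t ht
  have h0m : (0:ℝ) ∈ Set.Ico (0:ℝ) T := ⟨le_refl 0, hT⟩
  have h1 : r 0 ≤ r t := hmono h0m ht ht.1
  have h2 : 0 ≤ r t := le_trans (div_nonneg h0 (hSpos 0 h0m).le) h1
  have h3 : 0 ≤ r t * S t := mul_nonneg h2 (hSpos t ht).le
  rwa [hrdef, div_mul_cancel₀ (g t) (hSpos t ht).ne'] at h3

theorem stmt18 (α : ℝ) (hα : α ∈ Set.Icc (1:ℝ) 3) (a b c : ℝ → ℝ) (T : ℝ)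
    (hT : 0 < T)
    (ha : ∀ t ∈ Set.Ico (0:ℝ) T, HasDerivAt a ((a t)^2 + b t * c t) t)
    (hb : ∀ t ∈ Set.Ico (0:ℝ) T, HasDerivAt b ((b t)^2 + a t * c t) t)
    (hc : ∀ t ∈ Set.Ico (0:ℝ) T, HasDerivAt c ((c t)^2 + a t * b t) t)
    (hord : ∀ t ∈ Set.Ico (0:ℝ) T, a t ≤ b t ∧ b t ≤ c t)
    (hS : ∀ t ∈ Set.Ico (0:ℝ) T, 0 < 2 * (a t + b t + c t))
    (h0 : 0 ≤ hAlpha α (a 0) (b 0) (c 0)) :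
    ∀ t ∈ Set.Ico (0:ℝ) T, 0 ≤ hAlpha α (a t) (b t) (c t) := by
  obtain ⟨hα1, hα3⟩ := hα
  have hSder : ∀ t ∈ Set.Ico (0:ℝ) T,
      HasDerivAt (fun t => 2 * (a t + b t + c t))
        (2 * (((a t)^2 + b t * c t) + ((b t)^2 + a t * c t) + ((c t)^2 + a t * b t))) t :=
    fun t ht => (((ha t ht).add (hb t ht)).add (hc t ht)).const_mul 2
  have hcpos : ∀ t ∈ Set.Ico (0:ℝ) T, 0 < c t := by
    intro t ht
    have h1 := hS t ht
    have h2 := hord t ht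
    linarith [h2.1, h2.2]
  by_cases hcase : α < 2
  · -- h = a + (α-1) b
    have key := key_quot (fun t => a t + (α - 1) * b t) (fun t => 2 * (a t + b t + c t))
      (fun t => ((a t)^2 + b t * c t) + (α - 1) * ((b t)^2 + a t * c t))
      (fun t => 2 * (((a t)^2 + b t * c t) + ((b t)^2 + a t * c t) + ((c t)^2 + a t * b t)))
      T hT
      (fun t ht => (ha t ht).add (((hb t ht)).const_mul (α - 1)))
      hSder hS
      (by
        intro t ht
        obtain ⟨hab, hbc⟩ := hord t ht
        have h1 : 0 ≤ (2 - α) * ((b t)^2 * (c t - a t) + (c t)^2 * (b t - a t)) :=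
          mul_nonneg (sub_nonneg.2 hcase.le)
            (add_nonneg (mul_nonneg (sq_nonneg _) (sub_nonneg.2 (hab.trans hbc)))
              (mul_nonneg (sq_nonneg _) (sub_nonneg.2 hab)))
        have h2 : 0 ≤ (α - 1) * ((c t - b t) * ((a t)^2 + (b t)^2) + (b t)^2 * (b t - a t)) :=
          mul_nonneg (sub_nonneg.2 hα1)
            (add_nonneg (mul_nonneg (sub_nonneg.2 hbc) (add_nonneg (sq_nonneg _) (sq_nonneg _)))
              (mul_nonneg (sq_nonneg _) (sub_nonneg.2 hab)))
        linarith [h1, h2])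
      (by rwa [hAlpha, if_pos hcase] at h0)
    intro t ht
    rw [hAlpha, if_pos hcase]
    exact key t ht
  · -- h = a + b + (α-2) c
    push_neg at hcase
    have key := key_quot (fun t => a t + b t + (α - 2) * c t) (fun t => 2 * (a t + b t + c t))
      (fun t => ((a t)^2 + b t * c t) + ((b t)^2 + a t * c t) + (α - 2) * ((c t)^2 + a t * b t))
      (fun t => 2 * (((a t)^2 + b t * c t) + ((b t)^2 + a t * c t) + ((c t)^2 + a t * b t)))
      T hT
      (fun t ht => (((ha t ht).add (hb t ht))).add ((hc t ht).const_mul (α - 2)))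
      hSder hS
      (by
        intro t ht
        obtain ⟨hab, hbc⟩ := hord t ht
        have h1 : 0 ≤ (3 - α) * ((b t)^2 * (c t - a t) + (a t)^2 * (c t - b t)) :=
          mul_nonneg (sub_nonneg.2 hα3)
            (add_nonneg (mul_nonneg (sq_nonneg _) (sub_nonneg.2 (hab.trans hbc)))
              (mul_nonneg (sq_nonneg _) (sub_nonneg.2 hbc)))
        linarith [h1])
      (by rwa [hAlpha, if_neg (not_lt.2 hcase)] at h0)
    intro t ht
    rw [hAlpha, if_neg (not_lt.2 hcase)]
    exact key t ht
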